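/- Fix c ∈ ℂ. With N = 3, d = 3, variables u^γ_ℓ, and F^1 = c u^2_0 − c u^2_1 + u^1_0 u^2_0 − u^2_1 u^2_0 − u^1_1 u^2_1 + u^2_1 u^2_2 + u^3_0 − u^3_1, F^2 = u^2_0(u^1_{−1} − u^1_0 − u^2_0 + u^2_1), F^3 = u^3_0(u^1_{−1} − u^1_0 + u^2_{−1} − u^2_0), the matrices M̂ = [[0, u^2_0, 0], [u^2_0 − c, λ, 1], [u^3_0 − c u^1_0 + u^2_0 u^1_0, λ u^1_0 − u^2_0 u^1_0 − u^3_0, u^1_0]] and Û = [[u^2_0 − u^1_{−1} − u^2_{−1}, u^2_{−1}, 0], [u^2_0 − c, λ − u^1_{−1}, 1], [u^3_0 − c u^1_{−1} − c u^2_{−1} + c u^2_0 + u^1_0 u^2_0 + u^2_{−1} u^2_0 − u^2_0 u^2_1, λ u^1_{−1} + c u^2_{−1} − c u^2_0 − u^1_0 u^2_0 − u^2_{−1} u^2_0 + u^2_0 u^2_1 − u^3_0, 0]] satisfy det(M̂) ≠ 0 and D_t(M̂) = S(Û)·M̂ − M̂·Û, i.e. (M̂, Û) is a matrix Lax representation for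 this 3-component equation. -/

import Mathlib

/-!
Setup: `KK N` is the field of rational functions over `ℂ` in the commuting
variables `λ` (here `lam N`) and `u^γ_ℓ` (here `uu N γ ℓ`, `γ : Fin N`, `ℓ : ℤ`),
realized as the fraction field of the multivariate polynomial ring.
`SS N` is the shift automorphism `S` (fixing `ℂ` and `λ`, sending `u^γ_ℓ` to
`u^γ_{ℓ+1}`), and `Sz N ℓ = S^ℓ`.
-/

set_option maxHeartbeats 1000000

noncomputable section

open MvPolynomial

abbrev RR (N : ℕ) : Type := MvPolynomial (Option (Fin N × ℤ)) ℂ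
abbrev KK (N : ℕ) : Type := FractionRing (RR N)

def lam (N : ℕ) : KK N := algebraMap (RR N) (KK N) (X none)
def uu (N : ℕ) (γ : Fin N) (ℓ : ℤ) : KK N := algebraMap (RR N) (KK N) (X (some (γ, ℓ)))

def shiftIdx (N : ℕ) : Option (Fin N × ℤ) ≃ Option (Fin N × ℤ) :=
  Equiv.optionCongr ((Equiv.refl (Fin N)).prodCongr (Equiv.addRight (1:ℤ)))

/-- The shift on polynomials: `λ ↦ λ`, `u^γ_ℓ ↦ u^γ_{ℓ+1}`. -/
def shiftR (N : ℕ) : RR N ≃+* RR N := (renameEquiv ℂ (shiftIdx N)).toRingEquiv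

/-- The shift automorphism `S` of the field `KK N`. -/
def SS (N : ℕ) : RingAut (KK N) := IsFractionRing.ringEquivOfRingEquiv (shiftR N)

/-- `Sz N ℓ = S^ℓ`. -/
def Sz (N : ℕ) (ℓ : ℤ) : KK N ≃+* KK N := SS N ^ ℓ

lemma SS_uu (N γ ℓ) : SS N (uu N γ ℓ) = uu N γ (ℓ+1) := by
  unfold SS uu
  rw [IsFractionRing.ringEquivOfRingEquiv_algebraMap]
  congr 1
  simp [shiftR, shiftIdx]

lemma SS_lam (N) : SS N (lam N) = lam N := by
  unfold SS lam
  rw [IsFractionRing.ringEquivOfRingEquiv_algebraMap]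
  congr 1
  simp [shiftR, shiftIdx]

lemma SS_C (N) (a : ℂ) : SS N (algebraMap ℂ (KK N) a) = algebraMap ℂ (KK N) a := by
  unfold SS
  rw [IsScalarTower.algebraMap_apply ℂ (RR N) (KK N),
    IsFractionRing.ringEquivOfRingEquiv_algebraMap]
  congr 1
  simp [shiftR, algebraMap_eq]


lemma SS_inv_uu (N γ) (m : ℤ) : (SS N)⁻¹ (uu N γ m) = uu N γ (m - 1) := by
  show (SS N).symm _ = _
  apply (SS N).injective
  rw [RingEquiv.apply_symm_apply, SS_uu]
  congr 1; ring

lemma Sz_uu (N γ) (ℓ m : ℤ) : Sz N ℓ (uu N γ m) = uu N γ (m + ℓ) := by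
  unfold Sz
  induction ℓ using Int.induction_on generalizing m with
  | zero => simp
  | succ k ih =>
      rw [zpow_add_one]
      show (SS N ^ (k:ℤ)) (SS N (uu N γ m)) = _
      rw [SS_uu, ih]; congr 1; ring
  | pred k ih =>
      rw [zpow_sub_one]
      show (SS N ^ (-(k:ℤ))) ((SS N)⁻¹ (uu N γ m)) = _
      rw [SS_inv_uu, ih]; congr 1; ring

lemma Sz_lam (N) (ℓ : ℤ) : Sz N ℓ (lam N) = lam N := by
  unfold Sz
  induction ℓ using Int.induction_on with
  | zero => simp
  | succ k ih =>
      rw [zpow_add_one]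
      show (SS N ^ (k:ℤ)) (SS N (lam N)) = _
      rw [SS_lam, ih]
  | pred k ih =>
      rw [zpow_sub_one]
      show (SS N ^ (-(k:ℤ))) ((SS N)⁻¹ (lam N)) = _
      have : (SS N)⁻¹ (lam N) = lam N := by
        show (SS N).symm _ = _
        apply (SS N).injective
        rw [RingEquiv.apply_symm_apply, SS_lam]
      rw [this, ih]

lemma Sz_C (N) (ℓ : ℤ) (a : ℂ) : Sz N ℓ (algebraMap ℂ (KK N) a) = algebraMap ℂ (KK N) a := by
  unfold Sz
  induction ℓ using Int.induction_on with
  | zero => simp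
  | succ k ih =>
      rw [zpow_add_one]
      show (SS N ^ (k:ℤ)) (SS N _) = _
      rw [SS_C, ih]
  | pred k ih =>
      rw [zpow_sub_one]
      show (SS N ^ (-(k:ℤ))) ((SS N)⁻¹ _) = _
      have : (SS N)⁻¹ (algebraMap ℂ (KK N) a) = algebraMap ℂ (KK N) a := by
        show (SS N).symm _ = _
        apply (SS N).injective
        rw [RingEquiv.apply_symm_apply, SS_C]
      rw [this, ih]

lemma Sz_zero (N) (x : KK N) : Sz N 0 x = x := rfl

lemma uu_ne_zero (N γ ℓ) : uu N γ ℓ ≠ 0 := by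
  intro h
  have hinj : Function.Injective (algebraMap (RR N) (KK N)) :=
    IsFractionRing.injective _ _
  unfold uu at h
  exact MvPolynomial.X_ne_zero _ (hinj (h.trans (map_zero _).symm))


/-- The subfield of elements that are rational functions of `λ` and the
variables `u^γ_ℓ` with `ℓ ∈ s` only. -/
def depOn (N : ℕ) (s : Set ℤ) : Subfield (KK N) :=
  Subfield.closure (Set.range (algebraMap ℂ (KK N)) ∪ {lam N} ∪
    {x | ∃ γ : Fin N, ∃ ℓ ∈ s, x = uu N γ ℓ})

/-- The variables `u^γ_ℓ` (`γ = 1,2,3` corresponding to `Fin 3`). -/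
def v (γ : Fin 3) (ℓ : ℤ) : KK 3 := uu 3 γ ℓ

/-- the pair `(M̂, Û)` below is a matrix Lax representation for
the 3-component equation
`∂ₜ(u¹) = c u²₀ − c u²₁ + u¹₀ u²₀ − u²₁ u²₀ − u¹₁ u²₁ + u²₁ u²₂ + u³₀ − u³₁`,
`∂ₜ(u²) = u²₀(u¹₋₁ − u¹₀ − u²₀ + u²₁)`,
`∂ₜ(u³) = u³₀(u¹₋₁ − u¹₀ + u²₋₁ − u²₀)`. -/
theorem statement19 (c : ℂ)
    -- the total derivative `D_t` for the right-hand side above: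
    (Dt : Derivation ℂ (KK 3) (KK 3)) (hDtlam : Dt (lam 3) = 0)
    (hDtv : ∀ (γ : Fin 3) (ℓ : ℤ),
      Dt (v γ ℓ) = Sz 3 ℓ
        (![algebraMap ℂ (KK 3) c * v 1 0 - algebraMap ℂ (KK 3) c * v 1 1 + v 0 0 * v 1 0 -
             v 1 1 * v 1 0 - v 0 1 * v 1 1 + v 1 1 * v 1 2 + v 2 0 - v 2 1,
           v 1 0 * (v 0 (-1) - v 0 0 - v 1 0 + v 1 1),
           v 2 0 * (v 0 (-1) - v 0 0 + v 1 (-1) - v 1 0)] γ)) :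
    (!![0, v 1 0, 0;
        v 1 0 - algebraMap ℂ (KK 3) c, lam 3, 1;
        v 2 0 - algebraMap ℂ (KK 3) c * v 0 0 + v 1 0 * v 0 0,
          lam 3 * v 0 0 - v 1 0 * v 0 0 - v 2 0, v 0 0] :
        Matrix (Fin 3) (Fin 3) (KK 3)).det ≠ 0 ∧
    (!![0, v 1 0, 0;
        v 1 0 - algebraMap ℂ (KK 3) c, lam 3, 1;
        v 2 0 - algebraMap ℂ (KK 3) c * v 0 0 + v 1 0 * v 0 0,
          lam 3 * v 0 0 - v 1 0 * v 0 0 - v 2 0, v 0 0] :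
        Matrix (Fin 3) (Fin 3) (KK 3)).map ⇑Dt =
      (!![v 1 0 - v 0 (-1) - v 1 (-1), v 1 (-1), 0;
          v 1 0 - algebraMap ℂ (KK 3) c, lam 3 - v 0 (-1), 1;
          v 2 0 - algebraMap ℂ (KK 3) c * v 0 (-1) - algebraMap ℂ (KK 3) c * v 1 (-1) +
              algebraMap ℂ (KK 3) c * v 1 0 + v 0 0 * v 1 0 + v 1 (-1) * v 1 0 -
              v 1 0 * v 1 1,
            lam 3 * v 0 (-1) + algebraMap ℂ (KK 3) c * v 1 (-1) -
              algebraMap ℂ (KK 3) c * v 1 0 - v 0 0 * v 1 0 - v 1 (-1) * v 1 0 +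
              v 1 0 * v 1 1 - v 2 0, 0] :
          Matrix (Fin 3) (Fin 3) (KK 3)).map ⇑(Sz 3 1) *
        !![0, v 1 0, 0;
           v 1 0 - algebraMap ℂ (KK 3) c, lam 3, 1;
           v 2 0 - algebraMap ℂ (KK 3) c * v 0 0 + v 1 0 * v 0 0,
             lam 3 * v 0 0 - v 1 0 * v 0 0 - v 2 0, v 0 0] -
      !![0, v 1 0, 0;
         v 1 0 - algebraMap ℂ (KK 3) c, lam 3, 1;
         v 2 0 - algebraMap ℂ (KK 3) c * v 0 0 + v 1 0 * v 0 0,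
           lam 3 * v 0 0 - v 1 0 * v 0 0 - v 2 0, v 0 0] *
        !![v 1 0 - v 0 (-1) - v 1 (-1), v 1 (-1), 0;
           v 1 0 - algebraMap ℂ (KK 3) c, lam 3 - v 0 (-1), 1;
           v 2 0 - algebraMap ℂ (KK 3) c * v 0 (-1) - algebraMap ℂ (KK 3) c * v 1 (-1) +
               algebraMap ℂ (KK 3) c * v 1 0 + v 0 0 * v 1 0 + v 1 (-1) * v 1 0 -
               v 1 0 * v 1 1,
             lam 3 * v 0 (-1) + algebraMap ℂ (KK 3) c * v 1 (-1) -
               algebraMap ℂ (KK 3) c * v 1 0 - v 0 0 * v 1 0 - v 1 (-1) * v 1 0 +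
               v 1 0 * v 1 1 - v 2 0, 0] := by
  constructor
  · have hdet : (!![0, v 1 0, 0;
        v 1 0 - algebraMap ℂ (KK 3) c, lam 3, 1;
        v 2 0 - algebraMap ℂ (KK 3) c * v 0 0 + v 1 0 * v 0 0,
          lam 3 * v 0 0 - v 1 0 * v 0 0 - v 2 0, v 0 0] :
        Matrix (Fin 3) (Fin 3) (KK 3)).det = v 1 0 * v 2 0 := by
      simp [Matrix.det_fin_three]
      ring
    rw [hdet]
    exact mul_ne_zero (uu_ne_zero 3 1 0) (uu_ne_zero 3 2 0)
  · have hd0 := hDtv 0 0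
    have hd1 := hDtv 1 0
    have hd2 := hDtv 2 0
    simp only [Matrix.cons_val_zero, Matrix.cons_val_one, Matrix.head_cons,
      Matrix.cons_val_two, Matrix.tail_cons, Sz_zero, v] at hd0 hd1 hd2
    have hc : Dt (algebraMap ℂ (KK 3) c) = 0 := by
      simp [Dt.map_algebraMap c]
    ext i j
    fin_cases i <;> fin_cases j <;>
      · simp only [Matrix.map_apply, Matrix.mul_apply, Fin.sum_univ_three,
          Matrix.sub_apply, Matrix.of_apply, Matrix.cons_val', Matrix.cons_val_zero,
          Matrix.cons_val_one, Matrix.head_cons, Matrix.empty_val',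
          Matrix.cons_val_fin_one, Matrix.cons_val_two, Matrix.tail_cons,
          Fin.isValue, Fin.zero_eta, Fin.mk_one, Fin.reduceFinMk, v, map_add, map_sub, map_mul,
          Sz_uu, Sz_lam, Sz_C, Derivation.leibniz, smul_eq_mul, hDtlam,
          hd0, hd1, hd2, hc, Derivation.map_one_eq_zero, map_zero, map_one]
        try simp only [Matrix.vecHead, map_add, map_sub, map_mul, map_zero,
          Sz_uu, Sz_lam, Sz_C, Derivation.leibniz, smul_eq_mul, hd0, hd1, hd2, hc, hDtlam]
        try simp only [Matrix.vecHead, map_add, map_sub, map_mul, map_zero,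
          Sz_uu, Sz_lam, Sz_C, Derivation.leibniz, smul_eq_mul, hd0, hd1, hd2, hc, hDtlam]
        ring
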